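/- Let Θ_1,...,Θ_n ∈ ℝ^{n×n} be antisymmetric real matrices, M ∈ ℝ^{m×n}, and Ω ∈ ℂ^{m×m} a Hermitian positive semi-definite matrix. Define the linear operator U on ℂ^{n×n} by U(Z) := −4 Σ_{j,k=1}^n Z_{jk} Θ_j Mᵀ Ω M Θ_k. Then for every Hermitian positive semi-definite matrix Z ∈ ℂ^{n×n}, the matrix U(Z) is Hermitian positive semi-definite. -/

import Mathlib

open Matrix
open scoped ComplexOrder

lemma posSemidef_finsum {k p : ℕ} (f : Fin p → Matrix (Fin k) (Fin k) ℂ)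
    (hf : ∀ i, (f i).PosSemidef) : (∑ i, f i).PosSemidef := by
  classical
  refine Finset.sum_induction f _ (fun a b ha hb => ha.add hb) ?_ (fun i _ => hf i)
  exact Matrix.PosSemidef.zero

lemma sum_mul_mul_sum {k l : ℕ} (Ω : Matrix (Fin l) (Fin l) ℂ)
    (f : Fin k → Matrix (Fin k) (Fin l) ℂ) (g : Fin k → Matrix (Fin l) (Fin k) ℂ) :
    (∑ j, f j) * Ω * (∑ i, g i) = ∑ j, ∑ i, f j * Ω * g i := by
  rw [Matrix.sum_mul, Matrix.sum_mul]
  exact Finset.sum_congr rfl fun j _ => Matrix.mul_sum _ _ _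

lemma triple_sum_swap {a b c : ℕ} {α : Type*} [AddCommMonoid α]
    (F : Fin a → Fin b → Fin c → α) :
    ∑ p, ∑ j, ∑ k, F p j k = ∑ j, ∑ k, ∑ p, F p j k := by
  rw [Finset.sum_comm]
  exact Finset.sum_congr rfl fun j _ => by rw [Finset.sum_comm]

/-- **Positivity of the superoperator `U` (equations (V), (Vpos) of Section 4).**
For antisymmetric real matrices `Θ 1, ..., Θ n`, a real coupling matrix `M` and a
Hermitian positive semi-definite quantum Ito matrix `Ω`, the map
`U(Z) = -4 ∑ j k, Z j k • (Θ j Mᵀ Ω M Θ k)` sends Hermitian positive semi-definite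
matrices to Hermitian positive semi-definite matrices. -/
theorem U_posSemidef
    {n m : ℕ} (Θ : Fin n → Matrix (Fin n) (Fin n) ℝ)
    (hΘ : ∀ ℓ, (Θ ℓ)ᵀ = - Θ ℓ)
    (M : Matrix (Fin m) (Fin n) ℝ)
    (Ω : Matrix (Fin m) (Fin m) ℂ) (hΩ : Ω.PosSemidef)
    (Z : Matrix (Fin n) (Fin n) ℂ) (hZ : Z.PosSemidef) :
    ((-4 : ℂ) • ∑ j, ∑ k, Z j k •
        ((Θ j).map Complex.ofReal * (M.map Complex.ofReal)ᵀ * Ω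
          * M.map Complex.ofReal * (Θ k).map Complex.ofReal)).PosSemidef := by
  classical
  open scoped MatrixOrder in obtain ⟨B, hB⟩ := CStarAlgebra.nonneg_iff_eq_star_mul_self.mp hZ.nonneg
  rw [Matrix.star_eq_conjTranspose] at hB
  set M' : Matrix (Fin m) (Fin n) ℂ := M.map Complex.ofReal with hM'
  set Θ' : Fin n → Matrix (Fin n) (Fin n) ℂ := fun ℓ => (Θ ℓ).map Complex.ofReal with hΘ'
  set T : Fin n → Fin n → Matrix (Fin n) (Fin n) ℂ :=
    fun j k => Θ' j * M'ᵀ * Ω * M' * Θ' k with hT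
  -- conj-transpose of M' * Θ' k
  have hD : ∀ k, (M' * Θ' k)ᴴ = -(Θ' k * M'ᵀ) := by
    intro k
    have h1 : (Θ' k)ᴴ = -(Θ' k) := by
      ext i j
      have h := congrFun (congrFun (hΘ k) i) j
      simp only [Matrix.transpose_apply, Matrix.neg_apply] at h
      simp [hΘ', Matrix.conjTranspose_apply, Matrix.map_apply, h]
    have h2 : M'ᴴ = M'ᵀ := by
      ext i j
      simp [hM', Matrix.conjTranspose_apply, Matrix.map_apply]
    rw [Matrix.conjTranspose_mul, h1, h2, Matrix.neg_mul]
  set C : Fin n → Matrix (Fin m) (Fin n) ℂ :=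
    fun p => ∑ k, ((2 : ℂ) * B p k) • (M' * Θ' k) with hC
  have conj2 : (starRingEnd ℂ) 2 = 2 := by
    rw [show (2:ℂ) = ((2:ℝ):ℂ) by norm_num, Complex.conj_ofReal]
  have expand : ∀ p, (C p)ᴴ * Ω * C p
      = ∑ j, ∑ k, (-((starRingEnd ℂ) ((2:ℂ) * B p j) * ((2:ℂ) * B p k))) • T j k := by
    intro p
    rw [hC]
    rw [Matrix.conjTranspose_sum]
    simp only [Matrix.conjTranspose_smul, hD, smul_neg]
    rw [sum_mul_mul_sum]
    refine Finset.sum_congr rfl fun j _ => Finset.sum_congr rfl fun k _ => ?_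
    rw [hT]
    simp only [Matrix.neg_mul, Matrix.smul_mul, Matrix.mul_smul, smul_smul, neg_smul, neg_neg,
      smul_neg, Matrix.mul_neg]
    rw [Matrix.mul_assoc (Θ' j * M'ᵀ * Ω) M' (Θ' k)]
    congr 1
    rw [mul_comm, RCLike.star_def]
  have key : ((-4 : ℂ) • ∑ j, ∑ k, Z j k • T j k) = ∑ p, (C p)ᴴ * Ω * (C p) :=
    calc ((-4 : ℂ) • ∑ j, ∑ k, Z j k • T j k)
        = ∑ j, ∑ k, ((-4 : ℂ) * Z j k) • T j k := by
          rw [Finset.smul_sum]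
          refine Finset.sum_congr rfl fun j _ => ?_
          rw [Finset.smul_sum]
          exact Finset.sum_congr rfl fun k _ => smul_smul _ _ _
      _ = ∑ j, ∑ k, ∑ p, (-((starRingEnd ℂ) ((2:ℂ) * B p j) * ((2:ℂ) * B p k))) • T j k := by
          refine Finset.sum_congr rfl fun j _ => Finset.sum_congr rfl fun k _ => ?_
          rw [← Finset.sum_smul]
          congr 1
          rw [hB, Matrix.mul_apply, Finset.mul_sum]
          refine Finset.sum_congr rfl fun p _ => ?_
          simp only [Matrix.conjTranspose_apply, RCLike.star_def, _root_.map_mul, conj2]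
          ring
      _ = ∑ p, ∑ j, ∑ k, (-((starRingEnd ℂ) ((2:ℂ) * B p j) * ((2:ℂ) * B p k))) • T j k :=
          (triple_sum_swap _).symm
      _ = ∑ p, (C p)ᴴ * Ω * (C p) :=
          Finset.sum_congr rfl fun p _ => (expand p).symm
  rw [show ((-4 : ℂ) • ∑ j, ∑ k, Z j k •
        ((Θ j).map Complex.ofReal * (M.map Complex.ofReal)ᵀ * Ω
          * M.map Complex.ofReal * (Θ k).map Complex.ofReal)) =
      ((-4 : ℂ) • ∑ j, ∑ k, Z j k • T j k) from rfl]
  rw [key]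
  exact posSemidef_finsum _ fun p => hΩ.conjTranspose_mul_mul_same _
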